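/- J_0(S) is a closed subset of βS_d, and for every p ∈ J_0(S) and every q ∈ 0⁺(S), both q+p ∈ J_0(S) and p+q ∈ J_0(S); thus J_0(S) is a closed two-sided ideal of 0⁺(S). -/
import Mathlib


open Set Filter

attribute [local instance] Ultrafilter.add

/-- `S` is a subsemigroup of `((0,∞),+)` which is dense in `(0,∞)`
    (with the usual topology of `ℝ`). -/
def DenseSubsemigroupPos (S : Set ℝ) : Prop :=
  (∀ x ∈ S, 0 < x) ∧ (∀ x ∈ S, ∀ y ∈ S, x + y ∈ S) ∧ Ioi (0 : ℝ) ⊆ closure S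

/-- `0⁺(S)`: the ultrafilters (on `S`, viewed as ultrafilters on `ℝ` containing `S`)
    all of whose members meet every interval `(0,ε)`. -/
def zeroPlus (S : Set ℝ) : Set (Ultrafilter ℝ) :=
  {p | ∀ ε > (0 : ℝ), Ioo (0 : ℝ) ε ∩ S ∈ p}

/-- `L` is a left ideal of the subsemigroup `T` of `βS_d`. -/
def IsLeftIdealIn (T L : Set (Ultrafilter ℝ)) : Prop :=
  L.Nonempty ∧ L ⊆ T ∧ ∀ p ∈ T, ∀ q ∈ L, p + q ∈ L

/-- `L` is a minimal left ideal of the subsemigroup `T` of `βS_d`. -/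
def IsMinimalLeftIdealIn (T L : Set (Ultrafilter ℝ)) : Prop :=
  IsLeftIdealIn T L ∧ ∀ L', IsLeftIdealIn T L' → L' ⊆ L → L' = L

/-- `K(T)`: the smallest two sided ideal of `T`, i.e. the union of all
    minimal left ideals of `T`. -/
def smallestIdeal (T : Set (Ultrafilter ℝ)) : Set (Ultrafilter ℝ) :=
  ⋃₀ {L | IsMinimalLeftIdealIn T L}

/-- `A` is thick near zero (as a subset of `S`). -/
def ThickNearZero (S A : Set ℝ) : Prop :=
  ∃ ε > (0 : ℝ), ∀ F : Finset ℝ, F.Nonempty → ↑F ⊆ Ioo (0 : ℝ) ε ∩ S →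
    ∀ δ > (0 : ℝ), ∃ y ∈ Ioo (0 : ℝ) δ ∩ S, ∀ x ∈ F, x + y ∈ A

/-- `A` is syndetic near zero (as a subset of `S`). -/
def SyndeticNearZero (S A : Set ℝ) : Prop :=
  ∀ ε > (0 : ℝ), ∃ F : Finset ℝ, F.Nonempty ∧ ↑F ⊆ Ioo (0 : ℝ) ε ∩ S ∧
    ∃ δ > (0 : ℝ), ∀ x ∈ Ioo (0 : ℝ) δ ∩ S, ∃ t ∈ F, t + x ∈ A

/-- `A` is piecewise syndetic near zero (as a subset of `S`). -/
def PiecewiseSyndeticNearZero (S A : Set ℝ) : Prop :=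
  ∀ δ > (0 : ℝ), ∃ F : Finset ℝ, F.Nonempty ∧ ↑F ⊆ Ioo (0 : ℝ) δ ∩ S ∧
    ThickNearZero S {y | y ∈ S ∧ ∃ t ∈ F, t + y ∈ A}

/-- `T_0`: sequences in `S` with infimum `0`. -/
def T0 (S : Set ℝ) : Set (ℕ → ℝ) :=
  {f | (∀ n, f n ∈ S) ∧ IsGLB (range f) 0}

/-- `A` is a `J`-set near zero (as a subset of `S`). -/
def JSetNearZero (S A : Set ℝ) : Prop :=
  ∀ F : Finset (ℕ → ℝ), F.Nonempty → ↑F ⊆ T0 S → ∀ δ > (0 : ℝ),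
    ∃ a ∈ S ∩ Ioo (0 : ℝ) δ, ∃ H : Finset ℕ, H.Nonempty ∧
      ∀ f ∈ F, a + ∑ t ∈ H, f t ∈ A

/-- `J_0(S)`: the members of `0⁺(S)` all of whose members are `J`-sets near zero. -/
def J0 (S : Set ℝ) : Set (Ultrafilter ℝ) :=
  {p | p ∈ zeroPlus S ∧ ∀ A : Set ℝ, A ⊆ S → A ∈ p → JSetNearZero S A}

/-- `A` is central near zero: it belongs to some idempotent in `K(0⁺(S))`. -/
def CentralNearZero (S A : Set ℝ) : Prop :=
  ∃ p : Ultrafilter ℝ, p + p = p ∧ p ∈ smallestIdeal (zeroPlus S) ∧ A ∈ p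

/-- `A` is a `C`-set near zero (it satisfies the conclusion of the Central Sets
    Theorem near zero). -/
def CSetNearZero (S A : Set ℝ) : Prop :=
  ∀ δ ∈ Ioo (0 : ℝ) 1,
    ∃ (α : Finset (ℕ → ℝ) → ℝ) (H : Finset (ℕ → ℝ) → Finset ℕ),
      (∀ F : Finset (ℕ → ℝ), F.Nonempty → ↑F ⊆ T0 S →
        α F ∈ S ∧ α F < δ ∧ (H F).Nonempty) ∧
      (∀ F G : Finset (ℕ → ℝ), F.Nonempty → ↑F ⊆ T0 S → G.Nonempty → ↑G ⊆ T0 S →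
        F ⊂ G → ∀ i ∈ H F, ∀ j ∈ H G, i < j) ∧
      (∀ m : ℕ, ∀ G : Fin (m + 1) → Finset (ℕ → ℝ), ∀ f : Fin (m + 1) → ℕ → ℝ,
        (∀ i, (G i).Nonempty) → (∀ i, ↑(G i) ⊆ T0 S) →
        (∀ i j, i < j → G i ⊂ G j) → (∀ i, f i ∈ G i) →
        ∑ i, (α (G i) + ∑ t ∈ H (G i), f i t) ∈ A)


section Aux

attribute [local instance] Ultrafilter.add

theorem umem_of_superset {p : Ultrafilter ℝ} {s t : Set ℝ} (h : s ∈ p) (hst : s ⊆ t) : t ∈ p :=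
  Ultrafilter.mem_coe.mp (Filter.mem_of_superset (Ultrafilter.mem_coe.mpr h) hst)

theorem uinter_mem {p : Ultrafilter ℝ} {s t : Set ℝ} (h1 : s ∈ p) (h2 : t ∈ p) : s ∩ t ∈ p :=
  Ultrafilter.mem_coe.mp (Filter.inter_mem (Ultrafilter.mem_coe.mpr h1) (Ultrafilter.mem_coe.mpr h2))

theorem mem_ultra_add {p q : Ultrafilter ℝ} {A : Set ℝ} :
    A ∈ p + q ↔ ∀ᶠ x in (p : Filter ℝ), ∀ᶠ y in (q : Filter ℝ), x + y ∈ A :=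
  Iff.rfl

theorem S_mem_of_zeroPlus {S : Set ℝ} {p : Ultrafilter ℝ} (hp : p ∈ zeroPlus S) : S ∈ p :=
  umem_of_superset (hp 1 one_pos) (inter_subset_right)

theorem zeroPlus_add {S : Set ℝ} (hS : DenseSubsemigroupPos S)
    {p q : Ultrafilter ℝ} (hp : p ∈ zeroPlus S) (hq : q ∈ zeroPlus S) :
    p + q ∈ zeroPlus S := by
  intro ε hε
  rw [← Ultrafilter.mem_coe, ← setOf_mem_eq (s := Ioo (0:ℝ) ε ∩ S)]
  refine mem_ultra_add.mpr ?_
  have hx : ∀ᶠ x in (p : Filter ℝ), x ∈ Ioo (0:ℝ) (ε/2) ∩ S :=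
    Ultrafilter.mem_coe.mpr (hp (ε/2) (by linarith))
  filter_upwards [hx] with x hx
  have hy : ∀ᶠ y in (q : Filter ℝ), y ∈ Ioo (0:ℝ) (ε/2) ∩ S :=
    Ultrafilter.mem_coe.mpr (hq (ε/2) (by linarith))
  filter_upwards [hy] with y hy
  obtain ⟨⟨hx1, hx2⟩, hxS⟩ := hx
  obtain ⟨⟨hy1, hy2⟩, hyS⟩ := hy
  exact ⟨⟨by linarith, by linarith⟩, hS.2.1 x hxS y hyS⟩

theorem jset_add_left {S : Set ℝ} (hS : DenseSubsemigroupPos S)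
    {p q : Ultrafilter ℝ} (hp : p ∈ J0 S) (hq : q ∈ zeroPlus S)
    {A : Set ℝ} (hAS : A ⊆ S) (hA : A ∈ q + p) : JSetNearZero S A := by
  intro F hFne hFT0 δ hδ
  have hB : {x : ℝ | ∀ᶠ y in (p : Filter ℝ), x + y ∈ A} ∈ q := mem_ultra_add.mp hA
  have hxq : {x : ℝ | ∀ᶠ y in (p : Filter ℝ), x + y ∈ A} ∩ (Ioo (0:ℝ) (δ/2) ∩ S) ∈ q :=
    uinter_mem hB (hq (δ/2) (by linarith))
  obtain ⟨x, hxB, ⟨hx1, hx2⟩, hxS⟩ := Ultrafilter.nonempty_of_mem hxq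
  have hA' : {y : ℝ | y ∈ S ∧ x + y ∈ A} ∈ p := by
    have h1 : {y : ℝ | x + y ∈ A} ∈ p := Ultrafilter.mem_coe.mp hxB
    have h2 : S ∈ p := S_mem_of_zeroPlus hp.1
    exact umem_of_superset (uinter_mem h2 h1) fun y hy => hy
  have hJ : JSetNearZero S {y : ℝ | y ∈ S ∧ x + y ∈ A} :=
    hp.2 _ (fun y hy => hy.1) hA'
  obtain ⟨a, ⟨haS, ha1, ha2⟩, H, hHne, hHA⟩ := hJ F hFne hFT0 (δ/2) (by linarith)
  refine ⟨x + a, ⟨hS.2.1 x hxS a haS, by linarith, by linarith⟩, H, hHne, fun f hf => ?_⟩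
  have := hHA f hf
  rw [add_assoc]
  exact this.2

theorem jset_add_right {S : Set ℝ} (hS : DenseSubsemigroupPos S)
    {p q : Ultrafilter ℝ} (hp : p ∈ J0 S) (hq : q ∈ zeroPlus S)
    {A : Set ℝ} (hAS : A ⊆ S) (hA : A ∈ p + q) : JSetNearZero S A := by
  intro F hFne hFT0 δ hδ
  have hB : {x : ℝ | ∀ᶠ y in (q : Filter ℝ), x + y ∈ A} ∈ p := mem_ultra_add.mp hA
  have hB' : {x : ℝ | (∀ᶠ y in (q : Filter ℝ), x + y ∈ A) ∧ x ∈ S} ∈ p :=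
    umem_of_superset
      (uinter_mem hB (S_mem_of_zeroPlus hp.1)) fun y hy => hy
  have hJ : JSetNearZero S {x : ℝ | (∀ᶠ y in (q : Filter ℝ), x + y ∈ A) ∧ x ∈ S} :=
    hp.2 _ (fun y hy => hy.2) hB'
  obtain ⟨a, ⟨haS, ha1, ha2⟩, H, hHne, hHA⟩ := hJ F hFne hFT0 (δ/2) (by linarith)
  -- for each f ∈ F, eventually in q: (a + ∑ f) + y ∈ A
  have hC : (⋂ f ∈ F, {y : ℝ | (a + ∑ t ∈ H, f t) + y ∈ A}) ∩ (Ioo (0:ℝ) (δ/2) ∩ S) ∈ q := by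
    refine uinter_mem ?_ (hq (δ/2) (by linarith))
    refine (Filter.biInter_finset_mem F).mpr fun f hf => ?_
    exact Ultrafilter.mem_coe.mp (hHA f hf).1
  obtain ⟨y, hyC, ⟨hy1, hy2⟩, hyS⟩ := Ultrafilter.nonempty_of_mem hC
  refine ⟨a + y, ⟨hS.2.1 a haS y hyS, by linarith, by linarith⟩, H, hHne, fun f hf => ?_⟩
  have hmem : (a + ∑ t ∈ H, f t) + y ∈ A := by
    have := mem_iInter₂.mp hyC f hf
    exact this
  rw [add_right_comm] at hmem
  exact hmem

end Aux

/-- `J_0(S)` is closed and is a two sided ideal of `0⁺(S)`. -/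
theorem j0_isClosed_two_sided_ideal (S : Set ℝ) (hS : DenseSubsemigroupPos S) :
    IsClosed (J0 S) ∧
      ∀ p ∈ J0 S, ∀ q ∈ zeroPlus S, q + p ∈ J0 S ∧ p + q ∈ J0 S := by
  constructor
  · -- J0 S is closed
    have hJ0eq : J0 S = zeroPlus S ∩
        ⋂ A ∈ {A : Set ℝ | A ⊆ S ∧ ¬ JSetNearZero S A}, {p : Ultrafilter ℝ | A ∈ p}ᶜ := by
      ext p
      simp only [J0, mem_setOf_eq, mem_inter_iff, mem_iInter, mem_compl_iff]
      constructor
      · rintro ⟨h1, h2⟩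
        exact ⟨h1, fun A hA hAp => hA.2 (h2 A hA.1 hAp)⟩
      · rintro ⟨h1, h2⟩
        refine ⟨h1, fun A hAS hAp => ?_⟩
        by_contra hnot
        exact h2 A ⟨hAS, hnot⟩ hAp
    rw [hJ0eq]
    refine IsClosed.inter ?_ ?_
    · have : zeroPlus S = ⋂ ε ∈ Ioi (0:ℝ), {p : Ultrafilter ℝ | Ioo (0:ℝ) ε ∩ S ∈ p} := by
        ext p; simp [zeroPlus, mem_iInter]
      rw [this]
      exact isClosed_biInter fun ε _ => ultrafilter_isClosed_basic _
    · exact isClosed_biInter fun A _ =>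
        (isClosed_compl_iff).mpr (ultrafilter_isOpen_basic _)
  · intro p hp q hq
    refine ⟨⟨zeroPlus_add hS hq hp.1, fun A hAS hA => jset_add_left hS hp hq hAS hA⟩,
      ⟨zeroPlus_add hS hp.1 hq, fun A hAS hA => jset_add_right hS hp hq hAS hA⟩⟩
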